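/- For every multi-index k = (k₁,…,k_{r−1}; k_r) of nonnegative integers and every permutation σ of {1,…,r}, the element π((M^{(k)} − M^{(σ(k))})x₁) lies in the kernel of the linear map Li⁻_•; equivalently, Li⁻ applied to the expansion of M^{(k)}x₁ equals Li⁻ applied to the expansion of M^{(σ(k))}x₁, where σ(k) := (k_{σ(1)},…,k_{σ(r−1)}; k_{σ(r)}). -/

import Mathlib

open PowerSeries Finset

/-- Coefficient at `z^n` of the non-positive MPL attached to an index list:
for `s = (s₁,…,s_r)` this is `∑_{n = n₁ > n₂ > ⋯ > n_r > 0} n₁^{s₁}⋯n_r^{s_r}`. -/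
def liCoeff : List ℕ → ℕ → ℚ
  | [], n => if n = 0 then 1 else 0
  | s :: t, n => if n = 0 then 0 else (n : ℚ) ^ s * ∑ m ∈ Finset.range n, liCoeff t m

/-- The non-positive multiple polylogarithm
`Li⁻_{(s₁,…,s_r)}(z) = ∑_{n₁>⋯>n_r>0} n₁^{s₁}⋯n_r^{s_r} z^{n₁} ∈ ℚ⟦z⟧`. -/
noncomputable def Li (s : List ℕ) : PowerSeries ℚ := PowerSeries.mk (liCoeff s)

/-- `x₁^{(m)}`: iterated Lie bracket in `ℚ⟨x₀,x₁⟩`. -/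
def lieX : ℕ → FreeAlgebra ℚ (Fin 2)
  | 0 => FreeAlgebra.ι ℚ 1
  | m + 1 => FreeAlgebra.ι ℚ 0 * lieX m - lieX m * FreeAlgebra.ι ℚ 0

/-- The Magnus polynomial `M^{(k₁,…,k_r;k_∞)} = x₁^{(k₁)}⋯x₁^{(k_r)}x₀^{k_∞)`,
where the tuple has `r+1` entries, the last one playing the role of `k_∞`. -/
def magnus {r : ℕ} (k : Fin (r + 1) → ℕ) : FreeAlgebra ℚ (Fin 2) :=
  ((List.finRange r).map fun j => lieX (k j.castSucc)).prod *
    FreeAlgebra.ι ℚ 0 ^ (k (Fin.last r))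

/-- Decode a word `x₀^{a₁}x₁⋯x₀^{a_j}x₁` in `{x₀,x₁}*` into the
multi-index `(a₁,…,a_j)`. -/
def decode : List (Fin 2) → List ℕ
  | [] => []
  | a :: t =>
      if a = 1 then 0 :: decode t
      else
        match decode t with
        | [] => []
        | b :: rest => (b + 1) :: rest

/-- The composite `Li⁻_• ∘ π : ℚ⟨x₀,x₁⟩x₁ → ℚ⟦z⟧`, expanding an element of the
free algebra in the monomial (word) basis and applying `Li⁻` to each decoded word. -/
noncomputable def LiPi (a : FreeAlgebra ℚ (Fin 2)) : PowerSeries ℚ :=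
  (FreeAlgebra.equivMonoidAlgebraFreeMonoid a).coeff.sum
    fun w c => c • Li (decode (FreeMonoid.toList w))

/-! ### Auxiliary material -/

/-- The operator `θ = z d/dz` on `ℚ⟦z⟧`. -/
noncomputable def theta : PowerSeries ℚ →ₗ[ℚ] PowerSeries ℚ where
  toFun f := PowerSeries.mk fun n => (n : ℚ) * PowerSeries.coeff n f
  map_add' f g := by ext n; simp [mul_add]
  map_smul' c f := by ext n; simp; ring_nf

/-- `g m = θ^m (z/(1-z))`. -/
noncomputable def gser (m : ℕ) : PowerSeries ℚ :=
  PowerSeries.mk fun n => if n = 0 then 0 else (n : ℚ) ^ m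

lemma coeff_theta (f : PowerSeries ℚ) (n : ℕ) :
    PowerSeries.coeff n (theta f) = (n : ℚ) * PowerSeries.coeff n f := by
  simp [theta]

lemma theta_mul (f g : PowerSeries ℚ) :
    theta (f * g) = theta f * g + f * theta g := by
  ext n
  simp only [coeff_theta, map_add, PowerSeries.coeff_mul, Finset.mul_sum,
    ← Finset.sum_add_distrib]
  refine Finset.sum_congr rfl fun p hp => ?_
  rw [Finset.HasAntidiagonal.mem_antidiagonal] at hp
  have : (n : ℚ) = (p.1 : ℚ) + p.2 := by exact_mod_cast hp.symm
  rw [this]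
  ring

lemma theta_gser (m : ℕ) : theta (gser m) = gser (m + 1) := by
  ext n
  simp only [coeff_theta, gser, PowerSeries.coeff_mk]
  split_ifs with h
  · simp [h]
  · rw [pow_succ]; ring

lemma theta_pow_gser (p m : ℕ) : (theta ^ p) (gser m) = gser (m + p) := by
  induction p generalizing m with
  | zero => simp
  | succ p ih =>
    rw [pow_succ, Module.End.mul_apply, theta_gser, ih,
      show m + 1 + p = m + (p + 1) from by omega]

lemma Li_zero_cons (t : List ℕ) : Li (0 :: t) = gser 0 * Li t := by
  ext n
  rw [PowerSeries.coeff_mul, Finset.Nat.sum_antidiagonal_eq_sum_range_succ_mk]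
  simp only [Li, gser, PowerSeries.coeff_mk, liCoeff, pow_zero, one_mul]
  rcases Nat.eq_zero_or_pos n with h | h
  · subst h; simp
  · rw [if_neg h.ne']
    have hs := Finset.sum_range_succ'
      (fun x => (if x = 0 then (0 : ℚ) else 1) * liCoeff t (n - x)) n
    rw [Nat.succ_eq_add_one, hs]
    simp only [if_neg (Nat.succ_ne_zero _), one_mul]
    rw [← Finset.sum_range_reflect (fun m => liCoeff t m) n]
    simp only [if_true, zero_mul, add_zero]
    refine Finset.sum_congr rfl fun i hi => ?_
    rw [Finset.mem_range] at hi
    congr 1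
    omega

lemma Li_succ_cons (b : ℕ) (t : List ℕ) :
    Li ((b + 1) :: t) = theta (Li (b :: t)) := by
  ext n
  simp only [coeff_theta, Li, PowerSeries.coeff_mk, liCoeff]
  split_ifs with h
  · simp
  · rw [pow_succ]; ring

lemma decode_one_cons (w : List (Fin 2)) : decode (1 :: w) = 0 :: decode w := rfl

lemma decode_append_one_ne_nil (w : List (Fin 2)) : decode (w ++ [1]) ≠ [] := by
  induction w with
  | nil => simp [decode]
  | cons a t ih =>
    rcases Fin.exists_fin_two.mp ⟨a, rfl⟩ with h | h
    · subst h
      simp only [List.cons_append, decode]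
      norm_num
      obtain ⟨b, rest, hb⟩ := List.exists_cons_of_ne_nil ih
      rw [hb]
      simp
    · subst h
      simp [List.cons_append, decode]

lemma Li_decode_zero_cons (w : List (Fin 2)) (hw : decode w ≠ []) :
    Li (decode ((0 : Fin 2) :: w)) = theta (Li (decode w)) := by
  obtain ⟨b, rest, hb⟩ := List.exists_cons_of_ne_nil hw
  have : decode ((0 : Fin 2) :: w) = (b + 1) :: rest := by
    simp only [decode]
    norm_num
    rw [hb]
  rw [this, hb, Li_succ_cons]

/-- The operator representation `ρ : ℚ⟨x₀,x₁⟩ → End(ℚ⟦z⟧)`. -/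
noncomputable def rho : FreeAlgebra ℚ (Fin 2) →ₐ[ℚ] Module.End ℚ (PowerSeries ℚ) :=
  FreeAlgebra.lift ℚ fun i => if i = 0 then theta else LinearMap.mulLeft ℚ (gser 0)

/-- `LiPi` as a linear map, via `Finsupp.linearCombination`. -/
noncomputable def LiL : MonoidAlgebra ℚ (FreeMonoid (Fin 2)) →ₗ[ℚ] PowerSeries ℚ :=
  (Finsupp.linearCombination ℚ fun w => Li (decode (FreeMonoid.toList w))) ∘ₗ
    (MonoidAlgebra.coeffLinearEquiv ℚ).toLinearMap

lemma LiPi_eq (a : FreeAlgebra ℚ (Fin 2)) :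
    LiPi a = LiL (FreeAlgebra.equivMonoidAlgebraFreeMonoid a) := rfl

lemma LiL_single (w : FreeMonoid (Fin 2)) (c : ℚ) :
    LiL (MonoidAlgebra.single w c) = c • Li (decode (FreeMonoid.toList w)) :=
  Finsupp.linearCombination_single ℚ c w

lemma equiv_ι (i : Fin 2) :
    FreeAlgebra.equivMonoidAlgebraFreeMonoid (FreeAlgebra.ι ℚ i) =
      MonoidAlgebra.single (FreeMonoid.of i) (1 : ℚ) := by
  simp [FreeAlgebra.equivMonoidAlgebraFreeMonoid, MonoidAlgebra.of_apply]

lemma LiL_single_one_mul (f : MonoidAlgebra ℚ (FreeMonoid (Fin 2))) :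
    LiL (MonoidAlgebra.single (FreeMonoid.of 1) (1 : ℚ) * f) = gser 0 * LiL f := by
  induction f using MonoidAlgebra.induction_linear with
  | zero => simp
  | add f g hf hg => rw [mul_add, map_add, map_add, hf, hg, mul_add]
  | single w c =>
    rw [MonoidAlgebra.single_mul_single, one_mul, LiL_single, LiL_single]
    have : FreeMonoid.toList (FreeMonoid.of (1 : Fin 2) * w) =
        (1 : Fin 2) :: FreeMonoid.toList w := rfl
    rw [this, decode_one_cons, Li_zero_cons, mul_smul_comm]

lemma LiL_zero_word (f : MonoidAlgebra ℚ (FreeMonoid (Fin 2))) :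
    LiL (MonoidAlgebra.single (FreeMonoid.of 0) (1 : ℚ) * f *
        MonoidAlgebra.single (FreeMonoid.of 1) (1 : ℚ)) =
      theta (LiL (f * MonoidAlgebra.single (FreeMonoid.of 1) (1 : ℚ))) := by
  induction f using MonoidAlgebra.induction_linear with
  | zero => simp
  | add f g hf hg =>
    rw [mul_add, add_mul, map_add, add_mul, map_add, map_add, hf, hg]
  | single w c =>
    simp only [MonoidAlgebra.single_mul_single, one_mul, mul_one]
    rw [LiL_single, LiL_single, map_smul]
    congr 1
    have h1 : FreeMonoid.toList (FreeMonoid.of (0 : Fin 2) * w * FreeMonoid.of 1) =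
        (0 : Fin 2) :: (FreeMonoid.toList w ++ [1]) := rfl
    have h2 : FreeMonoid.toList (w * FreeMonoid.of (1 : Fin 2)) =
        FreeMonoid.toList w ++ [1] := rfl
    rw [h1, h2, Li_decode_zero_cons _ (decode_append_one_ne_nil _)]

lemma LiPi_key (a : FreeAlgebra ℚ (Fin 2)) :
    ∀ x : FreeAlgebra ℚ (Fin 2),
      LiPi (a * (x * FreeAlgebra.ι ℚ 1)) = rho a (LiPi (x * FreeAlgebra.ι ℚ 1)) := by
  induction a with
  | grade0 r =>
    intro x
    rw [← Algebra.smul_def r (x * FreeAlgebra.ι ℚ 1), LiPi_eq, map_smul, map_smul,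
      ← LiPi_eq, AlgHom.commutes, Module.algebraMap_end_apply]
  | grade1 i =>
    intro x
    rcases Fin.exists_fin_two.mp ⟨i, rfl⟩ with hi | hi <;> subst hi
    · rw [← mul_assoc]
      have : rho (FreeAlgebra.ι ℚ 0) = theta := by
        simp [rho]
      rw [this, LiPi_eq, LiPi_eq,
        map_mul FreeAlgebra.equivMonoidAlgebraFreeMonoid (FreeAlgebra.ι ℚ 0 * x)
          (FreeAlgebra.ι ℚ 1),
        map_mul FreeAlgebra.equivMonoidAlgebraFreeMonoid (FreeAlgebra.ι ℚ 0) x,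
        map_mul FreeAlgebra.equivMonoidAlgebraFreeMonoid x (FreeAlgebra.ι ℚ 1),
        equiv_ι, equiv_ι, LiL_zero_word]
    · have : rho (FreeAlgebra.ι ℚ 1) = LinearMap.mulLeft ℚ (gser 0) := by
        simp [rho]
      rw [this, LiPi_eq, LiPi_eq,
        map_mul FreeAlgebra.equivMonoidAlgebraFreeMonoid (FreeAlgebra.ι ℚ 1)
          (x * FreeAlgebra.ι ℚ 1),
        equiv_ι, LiL_single_one_mul, LinearMap.mulLeft_apply]
  | mul a b ha hb =>
    intro x
    rw [mul_assoc, ← mul_assoc b x, ha (b * x), mul_assoc, hb x, map_mul]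
    rfl
  | add a b ha hb =>
    intro x
    rw [add_mul, LiPi_eq, map_add, map_add, ← LiPi_eq, ← LiPi_eq, ha, hb, map_add]
    rfl

lemma rho_lieX (m : ℕ) : rho (lieX m) = LinearMap.mulLeft ℚ (gser m) := by
  induction m with
  | zero => simp [lieX, rho]
  | succ m ih =>
    have h0 : rho (FreeAlgebra.ι ℚ 0) = theta := by simp [rho]
    rw [lieX, map_sub, map_mul, map_mul, ih, h0]
    ext f
    simp only [LinearMap.sub_apply, Module.End.mul_apply, LinearMap.mulLeft_apply]
    rw [theta_mul, theta_gser]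
    ring

lemma mulLeft_list_prod (l : List ℕ) (f : PowerSeries ℚ) :
    ((l.map fun m => LinearMap.mulLeft ℚ (gser m)).prod) f = (l.map gser).prod * f := by
  induction l with
  | nil => simp
  | cons a t ih =>
    simp only [List.map_cons, List.prod_cons, Module.End.mul_apply, ih,
      LinearMap.mulLeft_apply, mul_assoc]

lemma LiPi_iota_one : LiPi (FreeAlgebra.ι ℚ 1) = gser 0 := by
  rw [LiPi_eq, equiv_ι, LiL_single, one_smul]
  have : decode (FreeMonoid.toList (FreeMonoid.of (1 : Fin 2))) = [0] := rfl
  rw [this]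
  ext n
  simp only [Li, gser, PowerSeries.coeff_mk, liCoeff, pow_zero, one_mul]
  split_ifs with h
  · rfl
  · rw [Finset.sum_ite_eq' (Finset.range n) 0 fun _ => (1 : ℚ)]
    simp [Nat.pos_of_ne_zero h]

lemma LiPi_magnus (r : ℕ) (k : Fin (r + 1) → ℕ) :
    LiPi (magnus k * FreeAlgebra.ι ℚ 1) = ∏ i, gser (k i) := by
  have h1 : magnus k * FreeAlgebra.ι ℚ 1 = magnus k * (1 * FreeAlgebra.ι ℚ 1) := by
    rw [one_mul]
  have h0 : rho (FreeAlgebra.ι ℚ 0) = theta := by simp [rho]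
  rw [h1, LiPi_key, one_mul, LiPi_iota_one, magnus, map_mul, map_pow, h0,
    Module.End.mul_apply, theta_pow_gser, zero_add, map_list_prod]
  have h2 : ((List.finRange r).map fun j => lieX (k j.castSucc)).map rho =
      ((List.finRange r).map fun j => k j.castSucc).map
        fun m => LinearMap.mulLeft ℚ (gser m) := by
    rw [List.map_map, List.map_map]
    exact List.map_congr_left fun j _ => rho_lieX _
  rw [h2, mulLeft_list_prod, List.map_map, Fin.prod_univ_castSucc, Fin.prod_univ_def]
  rfl

/-- Permuting the entries of the index of a Magnus polynomial does not change
the image under `Li⁻_• ∘ π`: the difference lies in the kernel. -/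
theorem magnus_perm_mem_ker (r : ℕ) (k : Fin (r + 1) → ℕ)
    (σ : Equiv.Perm (Fin (r + 1))) :
    LiPi ((magnus k - magnus (k ∘ σ)) * FreeAlgebra.ι ℚ 1) = 0 := by
  rw [sub_mul, LiPi_eq, map_sub, map_sub, ← LiPi_eq, ← LiPi_eq,
    LiPi_magnus, LiPi_magnus]
  have : ∏ i, gser ((k ∘ σ) i) = ∏ i, gser (k i) := by
    exact Equiv.prod_comp σ fun i => gser (k i)
  rw [this, sub_self]
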